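/- Let d ≥ 2 and let (m_p)_{p∈P} be a finite family of integers with each m_p ≥ 2 such that ∑_p C(m_p,2) = C(d,2). If ∑_p (m_p - 1) > (d+3)(d-1)/4, then ∑_p (m_p-1)^2 < (3/4)(d-1)^2. -/
import Mathlib

lemma two_choose_two (n : ℕ) : 2 * n.choose 2 = n * (n - 1) := by
  rw [Nat.choose_two_right, Nat.mul_div_cancel']
  rcases Nat.even_or_odd n with h | h
  · exact Dvd.dvd.mul_right h.two_dvd _
  · rcases n with _ | k
    · simp
    · have : Even k := by
        rcases h with ⟨j, hj⟩; exact ⟨j, by omega⟩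
      simpa using (this.two_dvd).mul_left (k+1)

theorem stmt2 {P : Type*} [Fintype P] (d : ℕ) (hd : 2 ≤ d) (m : P → ℕ)
    (hm : ∀ p, 2 ≤ m p) (hsum : ∑ p, (m p).choose 2 = d.choose 2)
    (hbig : (d + 3) * (d - 1) < 4 * ∑ p, (m p - 1)) :
    4 * ∑ p, (m p - 1) ^ 2 < 3 * (d - 1) ^ 2 := by
  have key : ∑ p, (m p - 1) ^ 2 + ∑ p, (m p - 1) = d * (d - 1) := by
    rw [← Finset.sum_add_distrib, ← two_choose_two d, ← hsum, Finset.mul_sum]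
    refine Finset.sum_congr rfl fun p _ => ?_
    have hp := hm p
    rw [two_choose_two (m p)]
    nlinarith [Nat.sub_add_cancel (by omega : 1 ≤ m p)]
  have ident : 4 * (d * (d - 1)) = (d + 3) * (d - 1) + 3 * (d - 1) ^ 2 := by
    obtain ⟨e, rfl⟩ : ∃ e, d = e + 2 := ⟨d - 2, by omega⟩
    simp [Nat.add_sub_cancel]; ring
  linarith
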